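/- Let x ∈ ℂ and write u := Re x. Set D(x) := (σ₁₂² − σ₁₁σ₂₂)x² + 2(μ₂σ₁₂ − μ₁σ₂₂)x + μ₂² ∈ ℂ and s := √((Re D(x) + |D(x)|)/2) ≥ 0. Then for every y ∈ ℂ with γ(x,y) = 0 one has Re y = (−σ₁₂u − μ₂ + s)/σ₂₂ or Re y = (−σ₁₂u − μ₂ − s)/σ₂₂; moreover, each of these two values is the real part of some root y ∈ ℂ of γ(x,·) = 0. -/

import Mathlib

open Real Complex

theorem stmt2
    (σ11 σ12 σ22 μ1 μ2 : ℝ)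
    (hσ11 : 0 < σ11) (hσ22 : 0 < σ22)
    (hdet : 0 < σ11 * σ22 - σ12 ^ 2)
    (hμ1 : 0 < μ1) (hμ2 : 0 < μ2)
    (γ : ℂ → ℂ → ℂ)
    (hγ : ∀ x y : ℂ, γ x y =
      (1 / 2) * ((σ11 : ℂ) * x ^ 2 + 2 * (σ12 : ℂ) * x * y + (σ22 : ℂ) * y ^ 2)
        + (μ1 : ℂ) * x + (μ2 : ℂ) * y)
    (x : ℂ) (u : ℝ) (hu : u = x.re)
    (D : ℂ)
    (hD : D = ((σ12 : ℂ) ^ 2 - (σ11 : ℂ) * (σ22 : ℂ)) * x ^ 2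
      + 2 * ((μ2 : ℂ) * (σ12 : ℂ) - (μ1 : ℂ) * (σ22 : ℂ)) * x + (μ2 : ℂ) ^ 2)
    (s : ℝ) (hs : s = Real.sqrt ((D.re + ‖D‖) / 2)) :
    (∀ y : ℂ, γ x y = 0 →
      y.re = (-σ12 * u - μ2 + s) / σ22 ∨ y.re = (-σ12 * u - μ2 - s) / σ22) ∧
    (∃ y : ℂ, γ x y = 0 ∧ y.re = (-σ12 * u - μ2 + s) / σ22) ∧
    (∃ y : ℂ, γ x y = 0 ∧ y.re = (-σ12 * u - μ2 - s) / σ22) := by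
  have hσ22' : (σ22 : ℂ) ≠ 0 := by exact_mod_cast hσ22.ne'
  have h1 : 0 ≤ (D.re + ‖D‖) / 2 := by
    have h := neg_abs_le D.re
    have h' := Complex.abs_re_le_norm D
    have := le_abs_self D.re
    linarith [neg_le_of_abs_le h']
  have h2 : 0 ≤ (‖D‖ - D.re) / 2 := by
    have h' := Complex.abs_re_le_norm D
    linarith [le_abs_self D.re]
  set t := Real.sqrt ((‖D‖ - D.re) / 2) with ht
  set w : ℂ := ⟨s, if 0 ≤ D.im then t else -t⟩ with hw
  have hs0 : 0 ≤ s := by rw [hs]; exact Real.sqrt_nonneg _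
  have ht0 : 0 ≤ t := Real.sqrt_nonneg _
  have hs2 : s ^ 2 = (D.re + ‖D‖) / 2 := by
    rw [hs, Real.sq_sqrt h1]
  have ht2 : t ^ 2 = (‖D‖ - D.re) / 2 := by
    rw [ht, Real.sq_sqrt h2]
  have hr2 : ‖D‖ ^ 2 = D.re ^ 2 + D.im ^ 2 := by
    rw [Complex.sq_norm, Complex.normSq_apply]; ring
  have hsq : (2 * (s * t)) ^ 2 = D.im ^ 2 := by
    have : (2 * (s * t)) ^ 2 = 4 * (s ^ 2 * t ^ 2) := by ring
    rw [this, hs2, ht2]; nlinarith [hr2]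
  have hnn : 0 ≤ 2 * (s * t) := by positivity
  have hst : 2 * (s * t) = |D.im| := by
    calc 2 * (s * t) = Real.sqrt ((2 * (s * t)) ^ 2) := (Real.sqrt_sq hnn).symm
    _ = Real.sqrt (D.im ^ 2) := by rw [hsq]
    _ = |D.im| := Real.sqrt_sq_eq_abs _
  have hw2 : w ^ 2 = D := by
    have hre : (w ^ 2).re = D.re := by
      rw [sq, Complex.mul_re]
      show s * s - _ = D.re
      by_cases hb : 0 ≤ D.im
      · simp only [hw, hb, if_true]; linear_combination hs2 - ht2
      · simp only [hw, hb, if_false]; linear_combination hs2 - ht2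
    have him : (w ^ 2).im = D.im := by
      rw [sq, Complex.mul_im]
      show s * _ + _ * s = D.im
      by_cases hb : 0 ≤ D.im
      · simp only [hw, hb, if_true]
        have habs : |D.im| = D.im := abs_of_nonneg hb
        rw [habs] at hst; linarith [hst]
      · simp only [hw, hb, if_false]
        have habs : |D.im| = -D.im := abs_of_neg (not_le.mp hb)
        rw [habs] at hst; linarith [hst]
    exact Complex.ext hre him
  have hwre : w.re = s := rfl
  have heq : ∀ y : ℂ, ((σ22 : ℂ) * y + (σ12 : ℂ) * x + (μ2 : ℂ)) ^ 2 - D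
      = 2 * (σ22 : ℂ) * γ x y := by
    intro y; rw [hγ x y, hD]; ring
  have h22 : (2 : ℂ) * (σ22 : ℂ) ≠ 0 := by simp [hσ22']
  have hroot : ∀ (e : ℂ), e ^ 2 = D →
      γ x ((e - (σ12 : ℂ) * x - (μ2 : ℂ)) / (σ22 : ℂ)) = 0 := by
    intro e he
    have h := heq ((e - (σ12 : ℂ) * x - (μ2 : ℂ)) / (σ22 : ℂ))
    have hc : (σ22 : ℂ) * ((e - (σ12 : ℂ) * x - (μ2 : ℂ)) / (σ22 : ℂ))
        + (σ12 : ℂ) * x + (μ2 : ℂ) = e := by field_simp; ring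
    rw [hc, he, sub_self] at h
    rcases mul_eq_zero.mp h.symm with h' | h'
    · exact absurd h' h22
    · exact h'
  have hrepart : ∀ (e : ℂ),
      (((e - (σ12 : ℂ) * x - (μ2 : ℂ)) / (σ22 : ℂ)) : ℂ).re
        = (-σ12 * u - μ2 + e.re) / σ22 := by
    intro e
    rw [Complex.div_ofReal_re]
    congr 1
    simp only [Complex.sub_re, Complex.mul_re, Complex.ofReal_re, Complex.ofReal_im,
      zero_mul, sub_zero, hu]
    ring
  have hnegre : (-w).re = -s := by simp [hwre]
  refine ⟨?_, ?_, ?_⟩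
  · intro y hy
    have h := heq y
    rw [hy, mul_zero] at h
    have h' : ((σ22 : ℂ) * y + (σ12 : ℂ) * x + (μ2 : ℂ)) ^ 2 = w ^ 2 := by
      rw [hw2]; linear_combination h
    rcases (Commute.all _ w).sq_eq_sq_iff_eq_or_eq_neg.mp h' with hc | hc
    · left
      have hy' : y = (w - (σ12 : ℂ) * x - (μ2 : ℂ)) / (σ22 : ℂ) := by
        field_simp; linear_combination hc
      rw [hy', hrepart w, hwre]
    · right
      have hy' : y = (-w - (σ12 : ℂ) * x - (μ2 : ℂ)) / (σ22 : ℂ) := by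
        field_simp; linear_combination hc
      rw [hy', hrepart (-w), hnegre]
      ring_nf
  · refine ⟨(w - (σ12 : ℂ) * x - (μ2 : ℂ)) / (σ22 : ℂ), hroot w hw2, ?_⟩
    rw [hrepart w, hwre]
  · refine ⟨(-w - (σ12 : ℂ) * x - (μ2 : ℂ)) / (σ22 : ℂ), ?_, ?_⟩
    · apply hroot; rw [neg_pow]; simp [hw2]
    · rw [hrepart (-w), hnegre]
      ring_nf
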